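/- Time-varying identification (weighting form) for T = 2: Let Z = (X₁, A₁, X₂, A₂, Y) with A₁, A₂ binary, H₁ = X₁, H₂ = (X₁, A₁, X₂), π_t(H_t) = P(A_t = 1 | H_t). Assume consistency (Y = Y^{A₁,A₂}) and sequential exchangeability (A_t ⟂ Y^{a₁,a₂} | H_t for t = 1,2). Then the mean counterfactual outcome under the intervention drawing A_t ~ Bernoulli(δπ_t(H_t)/(δπ_t(H_t)+1-π_t(H_t))) at each t equals E[ Y · ∏_{t=1}^{2} (δA_t + 1 - A_t)/(δπ_t(H_t) + 1 - π_t(H_t)) ]. -/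

import Mathlib

set_option maxHeartbeats 1000000
open MeasureTheory ProbabilityTheory

section Aux
variable {Ω : Type*} [MeasurableSpace Ω]

lemma integrable_of_ae_bound {P : Measure Ω} [IsFiniteMeasure P] {f : Ω → ℝ}
    (hf : AEStronglyMeasurable f P) {C : ℝ} (h : ∀ᵐ ω ∂P, |f ω| ≤ C) :
    Integrable f P :=
  Integrable.mono' (integrable_const C) hf (by simpa [Real.norm_eq_abs] using h)

lemma abs_div_le' {a D c C : ℝ} (hc : 0 < c) (hD : c ≤ D) (ha : |a| ≤ C) : |a / D| ≤ C / c := by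
  rw [abs_div, abs_of_pos (lt_of_lt_of_le hc hD)]
  exact div_le_div₀ (le_trans (abs_nonneg a) ha) ha hc hD

lemma abs_mul_le' {a b Ca Cb : ℝ} (ha : |a| ≤ Ca) (hb : |b| ≤ Cb) : |a * b| ≤ Ca * Cb := by
  rw [abs_mul]
  exact mul_le_mul ha hb (abs_nonneg b) (le_trans (abs_nonneg a) ha)

lemma null_of_setIntegral_nonpos (P : Measure Ω) [IsFiniteMeasure P] {f : Ω → ℝ}
    (hf : Measurable f) {s : Set Ω} (hs : MeasurableSet s) {C : ℝ}
    (hbd : ∀ ω ∈ s, 0 < f ω ∧ f ω ≤ C)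
    (hint : ∫ ω in s, f ω ∂P ≤ 0) : P s = 0 := by
  have hIOn : IntegrableOn f s P := by
    refine integrable_of_ae_bound hf.aestronglyMeasurable (C := C) ?_
    rw [ae_restrict_iff' hs]
    refine ae_of_all _ fun ω hω => ?_
    have := (hbd ω hω)
    rw [abs_of_pos this.1]; exact this.2
  have hnn : 0 ≤ᵐ[P.restrict s] f :=
    (ae_restrict_iff' hs).2 (ae_of_all _ fun ω hω => (hbd ω hω).1.le)
  have h0 : ∫ ω in s, f ω ∂P = 0 := le_antisymm hint (integral_nonneg_of_ae hnn)
  have hz : f =ᵐ[P.restrict s] 0 := (integral_eq_zero_iff_of_nonneg_ae hnn hIOn).1 h0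
  have hFalse : ∀ᵐ ω ∂P.restrict s, False := by
    filter_upwards [hz, ae_restrict_mem hs] with ω h1 h2
    exact absurd h1 (ne_of_gt (hbd ω h2).1)
  have := ae_iff.mp hFalse
  simp only [not_false_iff, Set.setOf_true] at this
  rw [← Measure.restrict_apply_univ]
  exact this

lemma ae_le_on_of_setIntegral_eq {𝒯 : Type*} [MeasurableSpace 𝒯]
    (P : Measure Ω) [IsProbabilityMeasure P] (Z : Ω → 𝒯) (hZ : Measurable Z)
    {B : Set Ω} (hB : MeasurableSet B) (φ : Ω → ℝ) (hφint : Integrable φ P)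
    {M : ℝ} (hφbd : ∀ᵐ ω ∂P, φ ω ≤ M) (m1 : 𝒯 → ℝ) (hm1meas : Measurable m1)
    (h : ∀ S : Set 𝒯, MeasurableSet S →
      ∫ ω in Z ⁻¹' S ∩ B, φ ω ∂P = ∫ ω in Z ⁻¹' S ∩ B, m1 (Z ω) ∂P) :
    ∀ᵐ ω ∂P, ω ∈ B → m1 (Z ω) ≤ M := by
  set s : ℕ → Set Ω := fun n => Z ⁻¹' {t | M < m1 t ∧ m1 t ≤ M + (n : ℝ) + 1} ∩ B with hsdef
  have hSmeas : ∀ n : ℕ, MeasurableSet {t | M < m1 t ∧ m1 t ≤ M + (n : ℝ) + 1} := fun n =>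
    (measurableSet_lt measurable_const hm1meas).inter
      (measurableSet_le hm1meas measurable_const)
  have hsmeas : ∀ n, MeasurableSet (s n) := fun n => (hZ (hSmeas n)).inter hB
  have hnull : ∀ n, P (s n) = 0 := by
    intro n
    refine null_of_setIntegral_nonpos P (f := fun ω => m1 (Z ω) - M)
      ((hm1meas.comp hZ).sub measurable_const) (hsmeas n) (C := (n : ℝ) + 1) ?_ ?_
    · rintro ω ⟨⟨h1, h2⟩, _⟩
      refine ⟨sub_pos.2 h1, ?_⟩; linarith
    · have hIOn : IntegrableOn (fun ω => m1 (Z ω)) (s n) P := by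
        refine integrable_of_ae_bound (hm1meas.comp hZ).aestronglyMeasurable
          (C := |M| + (n : ℝ) + 1) ?_
        rw [ae_restrict_iff' (hsmeas n)]
        refine ae_of_all _ fun ω hω => ?_
        obtain ⟨⟨h1, h2⟩, _⟩ := hω
        rw [abs_le]
        constructor
        · nlinarith [neg_abs_le M, le_abs_self M]
        · nlinarith [le_abs_self M]
      have e1 : ∫ ω in s n, (m1 (Z ω) - M) ∂P
          = ∫ ω in s n, m1 (Z ω) ∂P - (P (s n)).toReal * M := by
        rw [integral_sub hIOn (integrable_const M).integrableOn, setIntegral_const,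
          smul_eq_mul, measureReal_def]
      have e2 : ∫ ω in s n, m1 (Z ω) ∂P = ∫ ω in s n, φ ω ∂P := (h _ (hSmeas n)).symm
      have e3 : ∫ ω in s n, φ ω ∂P ≤ (P (s n)).toReal * M := by
        calc ∫ ω in s n, φ ω ∂P ≤ ∫ _ω in s n, M ∂P :=
              integral_mono_ae hφint.integrableOn (integrable_const M).integrableOn
                (ae_restrict_of_ae hφbd)
          _ = (P (s n)).toReal * M := by rw [setIntegral_const, smul_eq_mul, measureReal_def]
      linarith
  have hsub : {ω | ¬(ω ∈ B → m1 (Z ω) ≤ M)} ⊆ ⋃ n, s n := by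
    intro ω hω
    simp only [Set.mem_setOf_eq, Classical.not_imp, not_le] at hω
    obtain ⟨hωB, hωM⟩ := hω
    obtain ⟨n, hn⟩ := exists_nat_ge (m1 (Z ω) - M)
    exact Set.mem_iUnion.2 ⟨n, ⟨⟨hωM, by linarith⟩, hωB⟩⟩
  rw [ae_iff]
  exact measure_mono_null hsub (measure_iUnion_null hnull)

lemma comap_sm {𝒯 : Type*} [MeasurableSpace 𝒯] (Z : Ω → 𝒯) (G : 𝒯 → ℝ) (hG : Measurable G) :
    StronglyMeasurable[MeasurableSpace.comap Z inferInstance] (fun ω => G (Z ω)) := by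
  have hZ : Measurable[MeasurableSpace.comap Z inferInstance] Z := fun t ht => ⟨t, ht, rfl⟩
  exact (hG.comp hZ).stronglyMeasurable

lemma ae_pi_eq_zero {𝒯 : Type*} [MeasurableSpace 𝒯]
    (P : Measure Ω) [IsProbabilityMeasure P] (Z : Ω → 𝒯) (hZ : Measurable Z)
    (A : Ω → ℝ) (hA : Measurable A) (hAbin : ∀ ω, A ω = 0 ∨ A ω = 1)
    (π : 𝒯 → ℝ) (hπm : Measurable π)
    (hπge : ∀ᵐ ω ∂P, 0 ≤ π (Z ω)) (hπle : ∀ᵐ ω ∂P, π (Z ω) ≤ 1)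
    (hπeq : ∀ S : Set 𝒯, MeasurableSet S →
      ∫ ω in Z ⁻¹' S, A ω ∂P = ∫ ω in Z ⁻¹' S, π (Z ω) ∂P)
    {N : Set 𝒯} (hN : MeasurableSet N)
    (hnull : P (Z ⁻¹' N ∩ {ω | A ω = 1}) = 0) :
    ∀ᵐ ω ∂P, Z ω ∈ N → π (Z ω) = 0 := by
  have hind : A = fun ω => Set.indicator {ω | A ω = 1} (fun _ => (1 : ℝ)) ω :=
    funext fun ω => by
      rcases hAbin ω with h | h <;> simp [Set.indicator_apply, Set.mem_setOf_eq, h]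
  have hAint0 : ∫ ω in Z ⁻¹' N, A ω ∂P = 0 := by
    calc ∫ ω in Z ⁻¹' N, A ω ∂P
        = ∫ ω in Z ⁻¹' N, Set.indicator {ω | A ω = 1} (fun _ => (1:ℝ)) ω ∂P := by
          rw [← hind]
      _ = ∫ _ω in Z ⁻¹' N ∩ {ω | A ω = 1}, (1:ℝ) ∂P :=
          setIntegral_indicator (hA (measurableSet_singleton 1))
      _ = 0 := by rw [setIntegral_const, measureReal_def, hnull]; simp
  have hπint0 : ∫ ω in Z ⁻¹' N, π (Z ω) ∂P = 0 := by rw [← hπeq N hN]; exact hAint0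
  have hIOn : IntegrableOn (fun ω => π (Z ω)) (Z ⁻¹' N) P := by
    refine (integrable_of_ae_bound (hπm.comp hZ).aestronglyMeasurable (C := 1) ?_).integrableOn
    filter_upwards [hπge, hπle] with ω h0 h1
    show |π (Z ω)| ≤ 1
    rw [abs_of_nonneg h0]; exact h1
  have hz : (fun ω => π (Z ω)) =ᵐ[P.restrict (Z ⁻¹' N)] 0 :=
    (integral_eq_zero_iff_of_nonneg_ae (ae_restrict_of_ae hπge) hIOn).1 hπint0
  have := (ae_restrict_iff' (hZ hN)).1 hz
  filter_upwards [this] with ω h hmem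
  exact h hmem

end Aux


lemma key {Ω : Type*} {m : MeasurableSpace Ω} [m0 : MeasurableSpace Ω]
    (P : Measure Ω) [IsProbabilityMeasure P]
    (hm : m ≤ m0) (f f' g : Ω → ℝ)
    (hf : Integrable f P) (hf' : Integrable f' P)
    (hgf : Integrable (fun ω => g ω * f ω) P) (hgf' : Integrable (fun ω => g ω * f' ω) P)
    (hg : StronglyMeasurable[m] g)
    (hset : ∀ s, MeasurableSet[m] s → ∫ ω in s, f ω ∂P = ∫ ω in s, f' ω ∂P) :
    ∫ ω, g ω * f ω ∂P = ∫ ω, g ω * f' ω ∂P := by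
  have hsf : SigmaFinite (P.trim hm) := by
    have : IsFiniteMeasure (P.trim hm) := isFiniteMeasure_trim hm
    infer_instance
  set D : Ω → ℝ := f - f' with hD
  have hDint : Integrable D P := hf.sub hf'
  have h0 : (fun _ : Ω => (0:ℝ)) =ᵐ[P] P[D | m] := by
    refine ae_eq_condExp_of_forall_setIntegral_eq hm hDint
      (fun s _ _ => (integrable_zero _ _ _).integrableOn) (fun s hs _ => ?_) ?_
    · rw [integral_zero]
      have : ∫ ω in s, D ω ∂P = ∫ ω in s, f ω ∂P - ∫ ω in s, f' ω ∂P :=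
        integral_sub hf.integrableOn hf'.integrableOn
      rw [this, hset s hs, sub_self]
    · exact StronglyMeasurable.aestronglyMeasurable stronglyMeasurable_zero
  have hgD : Integrable (g * D) P := by
    have : g * D = fun ω => g ω * f ω - g ω * f' ω := by
      ext ω; simp [hD, mul_sub]
    rw [this]; exact hgf.sub hgf'
  have hmul : P[g * D|m] =ᵐ[P] g * P[D|m] :=
    condExp_mul_of_stronglyMeasurable_left hg hgD hDint
  have hz : ∫ ω, (g * D) ω ∂P = 0 := by
    rw [← integral_condExp hm, integral_congr_ae hmul]
    have h2 : (g * P[D|m] : Ω → ℝ) =ᵐ[P] fun _ => (0:ℝ) := by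
      filter_upwards [h0] with ω h
      simp only [Pi.mul_apply, ← h, mul_zero]
    rw [integral_congr_ae h2, integral_zero]
  have hsub : ∫ ω, (g * D) ω ∂P = ∫ ω, g ω * f ω ∂P - ∫ ω, g ω * f' ω ∂P := by
    have : ∀ ω, (g * D) ω = g ω * f ω - g ω * f' ω := by
      intro ω; simp [hD, mul_sub]
    simp_rw [this]
    exact integral_sub hgf hgf'
  linarith [hsub ▸ hz]



open MeasureTheory ProbabilityTheory

/-- Time-varying identification (weighting form) for `T = 2`: with `H₁ = X₁`,
`H₂ = (X₁, A₁, X₂)`, `πₜ(Hₜ) = P(Aₜ = 1 | Hₜ)`, under consistency and sequential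
exchangeability, the mean counterfactual outcome under the intervention drawing
`Aₜ ~ Bernoulli(δπₜ(Hₜ)/(δπₜ(Hₜ)+1-πₜ(Hₜ)))`, expressed via the g-formula as
`ψ(δ) = E[q₁ m(H₁,1) + (1-q₁) m(H₁,0)]` with
`m(H₁,a₁) = E[q₂ μ(H₂,1) + (1-q₂) μ(H₂,0) | H₁, A₁ = a₁]` and
`μ(h₂,a₂) = E[Y | H₂ = h₂, A₂ = a₂]`, equals
`E[Y ∏ₜ (δAₜ + 1 - Aₜ)/(δπₜ(Hₜ) + 1 - πₜ(Hₜ))]`. -/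
theorem time_varying_incremental_identification_two_periods
    {Ω 𝒳₁ 𝒳₂ : Type*} [MeasurableSpace Ω] [StandardBorelSpace Ω] [Nonempty Ω]
    [MeasurableSpace 𝒳₁] [MeasurableSpace 𝒳₂]
    (P : Measure Ω) [IsProbabilityMeasure P]
    (X1 : Ω → 𝒳₁) (X2 : Ω → 𝒳₂) (A1 A2 Y : Ω → ℝ)
    (hX1 : Measurable X1) (hX2 : Measurable X2)
    (hA1 : Measurable A1) (hA2 : Measurable A2) (hY : Measurable Y)
    (M : ℝ) (hYbd : ∀ ω, |Y ω| ≤ M)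
    (hA1bin : ∀ ω, A1 ω = 0 ∨ A1 ω = 1) (hA2bin : ∀ ω, A2 ω = 0 ∨ A2 ω = 1)
    -- histories H₁ = X₁ and H₂ = (X₁, A₁, X₂)
    (H2 : Ω → 𝒳₁ × ℝ × 𝒳₂) (hH2meas : Measurable H2)
    (hH2 : ∀ ω, H2 ω = (X1 ω, A1 ω, X2 ω))
    -- potential outcomes Y^{a₁,a₂}
    (Ypot : ℝ → ℝ → Ω → ℝ)
    (hYpotInt : ∀ a1 a2 : ℝ, Integrable (Ypot a1 a2) P)
    -- consistency: Y = Y^{A₁,A₂}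
    (hcons : ∀ ω, Y ω = Ypot (A1 ω) (A2 ω) ω)
    -- sequential exchangeability: Aₜ ⟂ Y^{a₁,a₂} | Hₜ for t = 1, 2
    (hexch1 : ∀ a1 a2 : ℝ, (a1 = 0 ∨ a1 = 1) → (a2 = 0 ∨ a2 = 1) →
      CondIndepFun (MeasurableSpace.comap X1 inferInstance) hX1.comap_le
        A1 (Ypot a1 a2) P)
    (hexch2 : ∀ a1 a2 : ℝ, (a1 = 0 ∨ a1 = 1) → (a2 = 0 ∨ a2 = 1) →
      CondIndepFun (MeasurableSpace.comap H2 inferInstance)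
        hH2meas.comap_le
        A2 (Ypot a1 a2) P)
    -- propensity scores πₜ(Hₜ) = P(Aₜ = 1 | Hₜ)
    (π1 : 𝒳₁ → ℝ) (hπ1meas : Measurable π1)
    (hπ1 : ∀ S : Set 𝒳₁, MeasurableSet S →
      ∫ ω in X1 ⁻¹' S, A1 ω ∂P = ∫ ω in X1 ⁻¹' S, π1 (X1 ω) ∂P)
    (π2 : 𝒳₁ × ℝ × 𝒳₂ → ℝ) (hπ2meas : Measurable π2)
    (hπ2 : ∀ S : Set (𝒳₁ × ℝ × 𝒳₂), MeasurableSet S →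
      ∫ ω in H2 ⁻¹' S, A2 ω ∂P = ∫ ω in H2 ⁻¹' S, π2 (H2 ω) ∂P)
    -- μ(h₂, a₂) = E[Y | H₂ = h₂, A₂ = a₂]
    (μ1 μ0 : 𝒳₁ × ℝ × 𝒳₂ → ℝ) (hμ1meas : Measurable μ1) (hμ0meas : Measurable μ0)
    (hμ1bd : ∀ h, |μ1 h| ≤ M) (hμ0bd : ∀ h, |μ0 h| ≤ M)
    (hμ1 : ∀ S : Set (𝒳₁ × ℝ × 𝒳₂), MeasurableSet S →
      ∫ ω in H2 ⁻¹' S ∩ {ω | A2 ω = 1}, Y ω ∂P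
        = ∫ ω in H2 ⁻¹' S ∩ {ω | A2 ω = 1}, μ1 (H2 ω) ∂P)
    (hμ0 : ∀ S : Set (𝒳₁ × ℝ × 𝒳₂), MeasurableSet S →
      ∫ ω in H2 ⁻¹' S ∩ {ω | A2 ω = 0}, Y ω ∂P
        = ∫ ω in H2 ⁻¹' S ∩ {ω | A2 ω = 0}, μ0 (H2 ω) ∂P)
    (δ : ℝ) (hδ : 0 < δ)
    -- m(h₁, a₁) = E[q₂ μ(H₂,1) + (1-q₂) μ(H₂,0) | H₁ = h₁, A₁ = a₁]
    (m1 m0 : 𝒳₁ → ℝ) (hm1meas : Measurable m1) (hm0meas : Measurable m0)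
    (hm1 : ∀ S : Set 𝒳₁, MeasurableSet S →
      ∫ ω in X1 ⁻¹' S ∩ {ω | A1 ω = 1},
          ((δ * π2 (H2 ω) / (δ * π2 (H2 ω) + 1 - π2 (H2 ω))) * μ1 (H2 ω)
            + (1 - δ * π2 (H2 ω) / (δ * π2 (H2 ω) + 1 - π2 (H2 ω))) * μ0 (H2 ω)) ∂P
        = ∫ ω in X1 ⁻¹' S ∩ {ω | A1 ω = 1}, m1 (X1 ω) ∂P)
    (hm0 : ∀ S : Set 𝒳₁, MeasurableSet S →
      ∫ ω in X1 ⁻¹' S ∩ {ω | A1 ω = 0},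
          ((δ * π2 (H2 ω) / (δ * π2 (H2 ω) + 1 - π2 (H2 ω))) * μ1 (H2 ω)
            + (1 - δ * π2 (H2 ω) / (δ * π2 (H2 ω) + 1 - π2 (H2 ω))) * μ0 (H2 ω)) ∂P
        = ∫ ω in X1 ⁻¹' S ∩ {ω | A1 ω = 0}, m0 (X1 ω) ∂P) :
    -- g-formula counterfactual mean = weighting representation
    ∫ ω, ((δ * π1 (X1 ω) / (δ * π1 (X1 ω) + 1 - π1 (X1 ω))) * m1 (X1 ω)
        + (1 - δ * π1 (X1 ω) / (δ * π1 (X1 ω) + 1 - π1 (X1 ω))) * m0 (X1 ω)) ∂P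
      = ∫ ω, Y ω * ((δ * A1 ω + 1 - A1 ω) / (δ * π1 (X1 ω) + 1 - π1 (X1 ω)))
                 * ((δ * A2 ω + 1 - A2 ω) / (δ * π2 (H2 ω) + 1 - π2 (H2 ω))) ∂P := by

  classical
  -- basic constants
  have hc : (0:ℝ) < min δ 1 := lt_min hδ one_pos
  have hM0 : (0:ℝ) ≤ M := le_trans (abs_nonneg _) (hYbd (Classical.arbitrary Ω))
  have hdaux : ∀ p : ℝ, 0 ≤ p → p ≤ 1 → min δ 1 ≤ δ * p + 1 - p := by
    intro p h0 h1
    rcases le_total δ 1 with h | h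
    · rw [min_eq_left h]; nlinarith
    · rw [min_eq_right h]; nlinarith
  -- measurability of basic pieces
  have hp1m : Measurable fun ω => π1 (X1 ω) := hπ1meas.comp hX1
  have hp2m : Measurable fun ω => π2 (H2 ω) := hπ2meas.comp hH2meas
  have hD1m : Measurable fun ω => (δ * π1 (X1 ω) + 1 - π1 (X1 ω)) :=
    ((measurable_const.mul hp1m).add measurable_const).sub hp1m
  have hD2m : Measurable fun ω => (δ * π2 (H2 ω) + 1 - π2 (H2 ω)) :=
    ((measurable_const.mul hp2m).add measurable_const).sub hp2m
  have hnum1m : Measurable fun ω => (δ * A1 ω + 1 - A1 ω) :=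
    ((measurable_const.mul hA1).add measurable_const).sub hA1
  have hw1m : Measurable fun ω => ((δ * A1 ω + 1 - A1 ω) / (δ * π1 (X1 ω) + 1 - π1 (X1 ω))) := hnum1m.div hD1m
  have hmu1c : Measurable fun ω => μ1 (H2 ω) := hμ1meas.comp hH2meas
  have hmu0c : Measurable fun ω => μ0 (H2 ω) := hμ0meas.comp hH2meas
  have hm1c : Measurable fun ω => m1 (X1 ω) := hm1meas.comp hX1
  have hm0c : Measurable fun ω => m0 (X1 ω) := hm0meas.comp hX1
  have hq2m : Measurable fun ω => δ * π2 (H2 ω) / (δ * π2 (H2 ω) + 1 - π2 (H2 ω)) := (measurable_const.mul hp2m).div hD2m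
  have hG2am : Measurable fun ω => (((δ * A1 ω + 1 - A1 ω) / (δ * π1 (X1 ω) + 1 - π1 (X1 ω))) * (δ / (δ * π2 (H2 ω) + 1 - π2 (H2 ω)))) := hw1m.mul (measurable_const.div hD2m)
  have hG2bm : Measurable fun ω => (((δ * A1 ω + 1 - A1 ω) / (δ * π1 (X1 ω) + 1 - π1 (X1 ω))) * (1 / (δ * π2 (H2 ω) + 1 - π2 (H2 ω)))) := hw1m.mul (measurable_const.div hD2m)
  -- binary bounds
  have hA1abs : ∀ ω, |A1 ω| ≤ 1 := fun ω => by rcases hA1bin ω with h | h <;> simp [h]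
  have hA2abs : ∀ ω, |A2 ω| ≤ 1 := fun ω => by rcases hA2bin ω with h | h <;> simp [h]
  have h1A1abs : ∀ ω, |1 - A1 ω| ≤ 1 := fun ω => by rcases hA1bin ω with h | h <;> simp [h]
  have h1A2abs : ∀ ω, |1 - A2 ω| ≤ 1 := fun ω => by rcases hA2bin ω with h | h <;> simp [h]
  have hA1int : Integrable A1 P :=
    integrable_of_ae_bound hA1.aestronglyMeasurable (ae_of_all _ hA1abs)
  have hA2int : Integrable A2 P :=
    integrable_of_ae_bound hA2.aestronglyMeasurable (ae_of_all _ hA2abs)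
  -- propensity ranges
  have hπ1le : ∀ᵐ ω ∂P, π1 (X1 ω) ≤ 1 := by
    have h := ae_le_on_of_setIntegral_eq P X1 hX1 MeasurableSet.univ A1 hA1int (M := 1)
      (ae_of_all _ fun ω => by rcases hA1bin ω with h | h <;> simp [h]) π1 hπ1meas
      (fun S hS => by simpa [Set.inter_univ] using hπ1 S hS)
    filter_upwards [h] with ω h; exact h (Set.mem_univ ω)
  have hπ1ge : ∀ᵐ ω ∂P, 0 ≤ π1 (X1 ω) := by
    have h := ae_le_on_of_setIntegral_eq P X1 hX1 MeasurableSet.univ (fun ω => -A1 ω)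
      hA1int.neg (M := 0)
      (ae_of_all _ fun ω => by rcases hA1bin ω with h | h <;> simp [h])
      (fun x => -π1 x) hπ1meas.neg
      (fun S hS => by
        simp only [Set.inter_univ]
        rw [integral_neg, integral_neg, hπ1 S hS])
    filter_upwards [h] with ω h
    have := h (Set.mem_univ ω); linarith
  have hπ2le : ∀ᵐ ω ∂P, π2 (H2 ω) ≤ 1 := by
    have h := ae_le_on_of_setIntegral_eq P H2 hH2meas MeasurableSet.univ A2 hA2int (M := 1)
      (ae_of_all _ fun ω => by rcases hA2bin ω with h | h <;> simp [h]) π2 hπ2meas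
      (fun S hS => by simpa [Set.inter_univ] using hπ2 S hS)
    filter_upwards [h] with ω h; exact h (Set.mem_univ ω)
  have hπ2ge : ∀ᵐ ω ∂P, 0 ≤ π2 (H2 ω) := by
    have h := ae_le_on_of_setIntegral_eq P H2 hH2meas MeasurableSet.univ (fun ω => -A2 ω)
      hA2int.neg (M := 0)
      (ae_of_all _ fun ω => by rcases hA2bin ω with h | h <;> simp [h])
      (fun x => -π2 x) hπ2meas.neg
      (fun S hS => by
        simp only [Set.inter_univ]
        rw [integral_neg, integral_neg, hπ2 S hS])
    filter_upwards [h] with ω h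
    have := h (Set.mem_univ ω); linarith
  have hπ1int : Integrable (fun ω => π1 (X1 ω)) P := by
    refine integrable_of_ae_bound hp1m.aestronglyMeasurable (C := 1) ?_
    filter_upwards [hπ1ge, hπ1le] with ω h0 h1
    rw [abs_of_nonneg h0]; exact h1
  have hπ2int : Integrable (fun ω => π2 (H2 ω)) P := by
    refine integrable_of_ae_bound hp2m.aestronglyMeasurable (C := 1) ?_
    filter_upwards [hπ2ge, hπ2le] with ω h0 h1
    rw [abs_of_nonneg h0]; exact h1
  -- the inner g-formula integrand Φ
  set Φ : Ω → ℝ := fun ω => (δ * π2 (H2 ω) / (δ * π2 (H2 ω) + 1 - π2 (H2 ω))) * μ1 (H2 ω) + (1 - δ * π2 (H2 ω) / (δ * π2 (H2 ω) + 1 - π2 (H2 ω))) * μ0 (H2 ω) with hΦdef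
  have hΦm : Measurable Φ := by
    rw [hΦdef]
    exact (hq2m.mul hmu1c).add ((measurable_const.sub hq2m).mul hmu0c)
  have hΦbd : ∀ᵐ ω ∂P, |Φ ω| ≤ ((δ / min δ 1) * M + (1 + δ / min δ 1) * M) := by
    filter_upwards [hπ2ge, hπ2le] with ω h0 h1
    have hd := hdaux _ h0 h1
    have hq2 : |δ * π2 (H2 ω) / (δ * π2 (H2 ω) + 1 - π2 (H2 ω))| ≤ δ / min δ 1 := by
      refine abs_div_le' hc hd ?_
      rw [abs_of_nonneg (mul_nonneg hδ.le h0)]; nlinarith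
    have h1q2 : |1 - (δ * π2 (H2 ω) / (δ * π2 (H2 ω) + 1 - π2 (H2 ω)))| ≤ 1 + δ / min δ 1 := by
      have h := abs_add_le (1:ℝ) (-(δ * π2 (H2 ω) / (δ * π2 (H2 ω) + 1 - π2 (H2 ω))))
      rw [← sub_eq_add_neg, abs_neg, abs_one] at h
      linarith
    have h2 := abs_add_le ((δ * π2 (H2 ω) / (δ * π2 (H2 ω) + 1 - π2 (H2 ω))) * μ1 (H2 ω)) ((1 - (δ * π2 (H2 ω) / (δ * π2 (H2 ω) + 1 - π2 (H2 ω)))) * μ0 (H2 ω))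
    have h3 := abs_mul_le' hq2 (hμ1bd (H2 ω))
    have h4 := abs_mul_le' h1q2 (hμ0bd (H2 ω))
    rw [hΦdef]
    dsimp only
    nlinarith
  have hΦint : Integrable Φ P := integrable_of_ae_bound hΦm.aestronglyMeasurable hΦbd
  -- measurable sets for A values
  have hA1s1 : MeasurableSet {ω | A1 ω = 1} := hA1 (measurableSet_singleton 1)
  have hA1s0 : MeasurableSet {ω | A1 ω = 0} := hA1 (measurableSet_singleton 0)
  have hA2s1 : MeasurableSet {ω | A2 ω = 1} := hA2 (measurableSet_singleton 1)
  have hA2s0 : MeasurableSet {ω | A2 ω = 0} := hA2 (measurableSet_singleton 0)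
  -- bounds on m1, m0 on the relevant events
  have hm1abs : ∀ᵐ ω ∂P, A1 ω = 1 → |m1 (X1 ω)| ≤ ((δ / min δ 1) * M + (1 + δ / min δ 1) * M) := by
    have hub := ae_le_on_of_setIntegral_eq P X1 hX1 hA1s1 Φ hΦint (M := ((δ / min δ 1) * M + (1 + δ / min δ 1) * M))
      (by filter_upwards [hΦbd] with ω h; exact le_of_abs_le h) m1 hm1meas hm1
    have hlb := ae_le_on_of_setIntegral_eq P X1 hX1 hA1s1 (fun ω => -Φ ω) hΦint.neg
      (M := ((δ / min δ 1) * M + (1 + δ / min δ 1) * M))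
      (by filter_upwards [hΦbd] with ω h
          show -Φ ω ≤ ((δ / min δ 1) * M + (1 + δ / min δ 1) * M)
          have h' := abs_le.mp h
          linarith [h'.1, h'.2])
      (fun x => -m1 x) hm1meas.neg
      (fun S hS => by rw [integral_neg, integral_neg, hm1 S hS])
    filter_upwards [hub, hlb] with ω h1 h2 hA
    have h1' : m1 (X1 ω) ≤ ((δ / min δ 1) * M + (1 + δ / min δ 1) * M) := h1 hA
    have h2' : -m1 (X1 ω) ≤ ((δ / min δ 1) * M + (1 + δ / min δ 1) * M) := h2 hA
    rw [abs_le]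
    exact ⟨by linarith, by linarith⟩
  have hm0abs : ∀ᵐ ω ∂P, A1 ω = 0 → |m0 (X1 ω)| ≤ ((δ / min δ 1) * M + (1 + δ / min δ 1) * M) := by
    have hub := ae_le_on_of_setIntegral_eq P X1 hX1 hA1s0 Φ hΦint (M := ((δ / min δ 1) * M + (1 + δ / min δ 1) * M))
      (by filter_upwards [hΦbd] with ω h; exact le_of_abs_le h) m0 hm0meas hm0
    have hlb := ae_le_on_of_setIntegral_eq P X1 hX1 hA1s0 (fun ω => -Φ ω) hΦint.neg
      (M := ((δ / min δ 1) * M + (1 + δ / min δ 1) * M))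
      (by filter_upwards [hΦbd] with ω h
          show -Φ ω ≤ ((δ / min δ 1) * M + (1 + δ / min δ 1) * M)
          have h' := abs_le.mp h
          linarith [h'.1, h'.2])
      (fun x => -m0 x) hm0meas.neg
      (fun S hS => by rw [integral_neg, integral_neg, hm0 S hS])
    filter_upwards [hub, hlb] with ω h1 h2 hA
    have h1' : m0 (X1 ω) ≤ ((δ / min δ 1) * M + (1 + δ / min δ 1) * M) := h1 hA
    have h2' : -m0 (X1 ω) ≤ ((δ / min δ 1) * M + (1 + δ / min δ 1) * M) := h2 hA
    rw [abs_le]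
    exact ⟨by linarith, by linarith⟩
  -- degenerate regions
  have hm1N : MeasurableSet {x | ((δ / min δ 1) * M + (1 + δ / min δ 1) * M) < |m1 x|} :=
    measurableSet_lt measurable_const hm1meas.abs
  have hm0N : MeasurableSet {x | ((δ / min δ 1) * M + (1 + δ / min δ 1) * M) < |m0 x|} :=
    measurableSet_lt measurable_const hm0meas.abs
  have hm1null : P (X1 ⁻¹' {x | ((δ / min δ 1) * M + (1 + δ / min δ 1) * M) < |m1 x|} ∩ {ω | A1 ω = 1}) = 0 := by
    rw [ae_iff] at hm1abs
    refine measure_mono_null ?_ hm1abs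
    rintro ω ⟨h1, h2⟩
    simp only [Set.mem_setOf_eq, Classical.not_imp, not_le]
    exact ⟨h2, h1⟩
  have hm0null : P (X1 ⁻¹' {x | ((δ / min δ 1) * M + (1 + δ / min δ 1) * M) < |m0 x|} ∩ {ω | 1 - A1 ω = 1}) = 0 := by
    rw [ae_iff] at hm0abs
    refine measure_mono_null ?_ hm0abs
    rintro ω ⟨h1, h2⟩
    simp only [Set.mem_setOf_eq, Classical.not_imp, not_le]
    have h2' : 1 - A1 ω = 1 := h2
    have : A1 ω = 0 := by linarith
    exact ⟨this, h1⟩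
  have hq1z : ∀ᵐ ω ∂P, ((δ / min δ 1) * M + (1 + δ / min δ 1) * M) < |m1 (X1 ω)| → π1 (X1 ω) = 0 := by
    have := ae_pi_eq_zero P X1 hX1 A1 hA1 hA1bin π1 hπ1meas hπ1ge hπ1le hπ1 hm1N hm1null
    filter_upwards [this] with ω h hlt
    exact h hlt
  have hq1o : ∀ᵐ ω ∂P, ((δ / min δ 1) * M + (1 + δ / min δ 1) * M) < |m0 (X1 ω)| → π1 (X1 ω) = 1 := by
    have hbin' : ∀ ω, 1 - A1 ω = 0 ∨ 1 - A1 ω = 1 := fun ω => by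
      rcases hA1bin ω with h | h <;> simp [h]
    have heq' : ∀ S : Set 𝒳₁, MeasurableSet S →
        ∫ ω in X1 ⁻¹' S, (1 - A1 ω) ∂P = ∫ ω in X1 ⁻¹' S, (1 - π1 (X1 ω)) ∂P := by
      intro S hS
      rw [integral_sub (integrable_const 1).integrableOn hA1int.integrableOn,
        integral_sub (integrable_const 1).integrableOn hπ1int.integrableOn, hπ1 S hS]
    have hge' : ∀ᵐ ω ∂P, 0 ≤ 1 - π1 (X1 ω) := by
      filter_upwards [hπ1le] with ω h; linarith
    have hle' : ∀ᵐ ω ∂P, 1 - π1 (X1 ω) ≤ 1 := by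
      filter_upwards [hπ1ge] with ω h; linarith
    have := ae_pi_eq_zero P X1 hX1 (fun ω => 1 - A1 ω)
      (measurable_const.sub hA1) hbin' (fun x => 1 - π1 x)
      (measurable_const.sub hπ1meas) hge' hle' heq' hm0N hm0null
    filter_upwards [this] with ω h hlt
    have := h hlt
    linarith
  -- pointwise bound for w1
  have hbdw1 : ∀ ω, 0 ≤ π1 (X1 ω) → π1 (X1 ω) ≤ 1 → |((δ * A1 ω + 1 - A1 ω) / (δ * π1 (X1 ω) + 1 - π1 (X1 ω)))| ≤ (max δ 1 / min δ 1) := by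
    intro ω h0 h1
    refine abs_div_le' hc (hdaux _ h0 h1) ?_
    rcases hA1bin ω with h | h
    · have e : δ * A1 ω + 1 - A1 ω = 1 := by rw [h]; ring
      rw [e, abs_one]; exact le_max_right δ 1
    · have e : δ * A1 ω + 1 - A1 ω = δ := by rw [h]; ring
      rw [e, abs_of_pos hδ]; exact le_max_left δ 1
  have hbdd2 : ∀ ω, 0 ≤ π2 (H2 ω) → π2 (H2 ω) ≤ 1 → |δ / (δ * π2 (H2 ω) + 1 - π2 (H2 ω))| ≤ δ / min δ 1 := by
    intro ω h0 h1
    exact abs_div_le' hc (hdaux _ h0 h1) (abs_of_pos hδ).le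
  have hbdd2' : ∀ ω, 0 ≤ π2 (H2 ω) → π2 (H2 ω) ≤ 1 → |1 / (δ * π2 (H2 ω) + 1 - π2 (H2 ω))| ≤ 1 / min δ 1 := by
    intro ω h0 h1
    exact abs_div_le' hc (hdaux _ h0 h1) (abs_one).le
  have hbdd1 : ∀ ω, 0 ≤ π1 (X1 ω) → π1 (X1 ω) ≤ 1 → |δ / (δ * π1 (X1 ω) + 1 - π1 (X1 ω))| ≤ δ / min δ 1 := by
    intro ω h0 h1
    exact abs_div_le' hc (hdaux _ h0 h1) (abs_of_pos hδ).le
  have hbdd1' : ∀ ω, 0 ≤ π1 (X1 ω) → π1 (X1 ω) ≤ 1 → |1 / (δ * π1 (X1 ω) + 1 - π1 (X1 ω))| ≤ 1 / min δ 1 := by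
    intro ω h0 h1
    exact abs_div_le' hc (hdaux _ h0 h1) (abs_one).le
  -- Integrability of all integrands
  have int1 : Integrable (fun ω => Y ω * A2 ω) P := by
    refine integrable_of_ae_bound (hY.mul hA2).aestronglyMeasurable (C := M * 1)
      (ae_of_all _ fun ω => abs_mul_le' (hYbd ω) (hA2abs ω))
  have int2 : Integrable (fun ω => μ1 (H2 ω) * A2 ω) P := by
    refine integrable_of_ae_bound (hmu1c.mul hA2).aestronglyMeasurable (C := M * 1)
      (ae_of_all _ fun ω => abs_mul_le' (hμ1bd (H2 ω)) (hA2abs ω))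
  have int3 : Integrable (fun ω => Y ω * (1 - A2 ω)) P := by
    refine integrable_of_ae_bound (hY.mul (measurable_const.sub hA2)).aestronglyMeasurable
      (C := M * 1) (ae_of_all _ fun ω => abs_mul_le' (hYbd ω) (h1A2abs ω))
  have int4 : Integrable (fun ω => μ0 (H2 ω) * (1 - A2 ω)) P := by
    refine integrable_of_ae_bound (hmu0c.mul (measurable_const.sub hA2)).aestronglyMeasurable
      (C := M * 1) (ae_of_all _ fun ω => abs_mul_le' (hμ0bd (H2 ω)) (h1A2abs ω))
  have int5 : Integrable (fun ω => (((δ * A1 ω + 1 - A1 ω) / (δ * π1 (X1 ω) + 1 - π1 (X1 ω))) * (δ / (δ * π2 (H2 ω) + 1 - π2 (H2 ω)))) * (Y ω * A2 ω)) P := by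
    refine integrable_of_ae_bound
      ((hG2am).mul (hY.mul hA2)).aestronglyMeasurable
      (C := (max δ 1 / min δ 1) * (δ / min δ 1) * (M * 1)) ?_
    filter_upwards [hπ1ge, hπ1le, hπ2ge, hπ2le] with ω h1 h2 h3 h4
    exact abs_mul_le' (abs_mul_le' (hbdw1 ω h1 h2) (hbdd2 ω h3 h4))
      (abs_mul_le' (hYbd ω) (hA2abs ω))
  have int6 : Integrable (fun ω => (((δ * A1 ω + 1 - A1 ω) / (δ * π1 (X1 ω) + 1 - π1 (X1 ω))) * (δ / (δ * π2 (H2 ω) + 1 - π2 (H2 ω)))) * (μ1 (H2 ω) * A2 ω)) P := by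
    refine integrable_of_ae_bound
      ((hG2am).mul (hmu1c.mul hA2)).aestronglyMeasurable
      (C := (max δ 1 / min δ 1) * (δ / min δ 1) * (M * 1)) ?_
    filter_upwards [hπ1ge, hπ1le, hπ2ge, hπ2le] with ω h1 h2 h3 h4
    exact abs_mul_le' (abs_mul_le' (hbdw1 ω h1 h2) (hbdd2 ω h3 h4))
      (abs_mul_le' (hμ1bd (H2 ω)) (hA2abs ω))
  have int7 : Integrable (fun ω => ((((δ * A1 ω + 1 - A1 ω) / (δ * π1 (X1 ω) + 1 - π1 (X1 ω))) * (δ / (δ * π2 (H2 ω) + 1 - π2 (H2 ω)))) * μ1 (H2 ω)) * A2 ω) P := by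
    refine integrable_of_ae_bound
      (((hG2am).mul hmu1c).mul hA2).aestronglyMeasurable
      (C := ((max δ 1 / min δ 1) * (δ / min δ 1) * M) * 1) ?_
    filter_upwards [hπ1ge, hπ1le, hπ2ge, hπ2le] with ω h1 h2 h3 h4
    exact abs_mul_le' (abs_mul_le' (abs_mul_le' (hbdw1 ω h1 h2) (hbdd2 ω h3 h4))
      (hμ1bd (H2 ω))) (hA2abs ω)
  have int8 : Integrable (fun ω => ((((δ * A1 ω + 1 - A1 ω) / (δ * π1 (X1 ω) + 1 - π1 (X1 ω))) * (δ / (δ * π2 (H2 ω) + 1 - π2 (H2 ω)))) * μ1 (H2 ω)) * π2 (H2 ω)) P := by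
    refine integrable_of_ae_bound
      (((hG2am).mul hmu1c).mul hp2m).aestronglyMeasurable
      (C := ((max δ 1 / min δ 1) * (δ / min δ 1) * M) * 1) ?_
    filter_upwards [hπ1ge, hπ1le, hπ2ge, hπ2le] with ω h1 h2 h3 h4
    refine abs_mul_le' (abs_mul_le' (abs_mul_le' (hbdw1 ω h1 h2) (hbdd2 ω h3 h4))
      (hμ1bd (H2 ω))) ?_
    rw [abs_of_nonneg h3]; exact h4
  have int9 : Integrable (fun ω => (((δ * A1 ω + 1 - A1 ω) / (δ * π1 (X1 ω) + 1 - π1 (X1 ω))) * (1 / (δ * π2 (H2 ω) + 1 - π2 (H2 ω)))) * (Y ω * (1 - A2 ω))) P := by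
    refine integrable_of_ae_bound
      ((hG2bm).mul (hY.mul (measurable_const.sub hA2))).aestronglyMeasurable
      (C := (max δ 1 / min δ 1) * (1 / min δ 1) * (M * 1)) ?_
    filter_upwards [hπ1ge, hπ1le, hπ2ge, hπ2le] with ω h1 h2 h3 h4
    exact abs_mul_le' (abs_mul_le' (hbdw1 ω h1 h2) (hbdd2' ω h3 h4))
      (abs_mul_le' (hYbd ω) (h1A2abs ω))
  have int10 : Integrable (fun ω => (((δ * A1 ω + 1 - A1 ω) / (δ * π1 (X1 ω) + 1 - π1 (X1 ω))) * (1 / (δ * π2 (H2 ω) + 1 - π2 (H2 ω)))) * (μ0 (H2 ω) * (1 - A2 ω))) P := by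
    refine integrable_of_ae_bound
      ((hG2bm).mul (hmu0c.mul (measurable_const.sub hA2))).aestronglyMeasurable
      (C := (max δ 1 / min δ 1) * (1 / min δ 1) * (M * 1)) ?_
    filter_upwards [hπ1ge, hπ1le, hπ2ge, hπ2le] with ω h1 h2 h3 h4
    exact abs_mul_le' (abs_mul_le' (hbdw1 ω h1 h2) (hbdd2' ω h3 h4))
      (abs_mul_le' (hμ0bd (H2 ω)) (h1A2abs ω))
  have int11 : Integrable (fun ω => ((((δ * A1 ω + 1 - A1 ω) / (δ * π1 (X1 ω) + 1 - π1 (X1 ω))) * (1 / (δ * π2 (H2 ω) + 1 - π2 (H2 ω)))) * μ0 (H2 ω)) * (1 - A2 ω)) P := by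
    refine integrable_of_ae_bound
      (((hG2bm).mul hmu0c).mul (measurable_const.sub hA2)).aestronglyMeasurable
      (C := ((max δ 1 / min δ 1) * (1 / min δ 1) * M) * 1) ?_
    filter_upwards [hπ1ge, hπ1le, hπ2ge, hπ2le] with ω h1 h2 h3 h4
    exact abs_mul_le' (abs_mul_le' (abs_mul_le' (hbdw1 ω h1 h2) (hbdd2' ω h3 h4))
      (hμ0bd (H2 ω))) (h1A2abs ω)
  have int12 : Integrable (fun ω => ((((δ * A1 ω + 1 - A1 ω) / (δ * π1 (X1 ω) + 1 - π1 (X1 ω))) * (1 / (δ * π2 (H2 ω) + 1 - π2 (H2 ω)))) * μ0 (H2 ω)) * (1 - π2 (H2 ω))) P := by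
    refine integrable_of_ae_bound
      (((hG2bm).mul hmu0c).mul (measurable_const.sub hp2m)).aestronglyMeasurable
      (C := ((max δ 1 / min δ 1) * (1 / min δ 1) * M) * 1) ?_
    filter_upwards [hπ1ge, hπ1le, hπ2ge, hπ2le] with ω h1 h2 h3 h4
    refine abs_mul_le' (abs_mul_le' (abs_mul_le' (hbdw1 ω h1 h2) (hbdd2' ω h3 h4))
      (hμ0bd (H2 ω))) ?_
    rw [abs_le]; constructor <;> linarith
  have int13 : Integrable (fun ω => Φ ω * A1 ω) P := by
    refine integrable_of_ae_bound (hΦm.mul hA1).aestronglyMeasurable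
      (C := ((δ / min δ 1) * M + (1 + δ / min δ 1) * M) * 1) ?_
    filter_upwards [hΦbd] with ω h
    exact abs_mul_le' h (hA1abs ω)
  have int14 : Integrable (fun ω => m1 (X1 ω) * A1 ω) P := by
    refine integrable_of_ae_bound (hm1c.mul hA1).aestronglyMeasurable
      (C := ((δ / min δ 1) * M + (1 + δ / min δ 1) * M) * 1) ?_
    filter_upwards [hm1abs] with ω h
    rcases hA1bin ω with h0 | h0
    · rw [h0, mul_zero, abs_zero]; positivity
    · exact abs_mul_le' (h h0) (hA1abs ω)
  have int15 : Integrable (fun ω => Φ ω * (1 - A1 ω)) P := by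
    refine integrable_of_ae_bound (hΦm.mul (measurable_const.sub hA1)).aestronglyMeasurable
      (C := ((δ / min δ 1) * M + (1 + δ / min δ 1) * M) * 1) ?_
    filter_upwards [hΦbd] with ω h
    exact abs_mul_le' h (h1A1abs ω)
  have int16 : Integrable (fun ω => m0 (X1 ω) * (1 - A1 ω)) P := by
    refine integrable_of_ae_bound (hm0c.mul (measurable_const.sub hA1)).aestronglyMeasurable
      (C := ((δ / min δ 1) * M + (1 + δ / min δ 1) * M) * 1) ?_
    filter_upwards [hm0abs] with ω h
    rcases hA1bin ω with h0 | h0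
    · exact abs_mul_le' (h h0) (h1A1abs ω)
    · have e : m0 (X1 ω) * (1 - A1 ω) = 0 := by rw [h0]; ring
      rw [e, abs_zero]; positivity
  have int17 : Integrable (fun ω => (δ / (δ * π1 (X1 ω) + 1 - π1 (X1 ω))) * (Φ ω * A1 ω)) P := by
    refine integrable_of_ae_bound
      ((measurable_const.div hD1m).mul (hΦm.mul hA1)).aestronglyMeasurable
      (C := (δ / min δ 1) * (((δ / min δ 1) * M + (1 + δ / min δ 1) * M) * 1)) ?_
    filter_upwards [hπ1ge, hπ1le, hΦbd] with ω h1 h2 h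
    exact abs_mul_le' (hbdd1 ω h1 h2) (abs_mul_le' h (hA1abs ω))
  have int18 : Integrable (fun ω => (δ / (δ * π1 (X1 ω) + 1 - π1 (X1 ω))) * (m1 (X1 ω) * A1 ω)) P := by
    refine integrable_of_ae_bound
      ((measurable_const.div hD1m).mul (hm1c.mul hA1)).aestronglyMeasurable
      (C := (δ / min δ 1) * (((δ / min δ 1) * M + (1 + δ / min δ 1) * M) * 1)) ?_
    filter_upwards [hπ1ge, hπ1le, hm1abs] with ω h1 h2 h
    refine abs_mul_le' (hbdd1 ω h1 h2) ?_
    rcases hA1bin ω with h0 | h0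
    · rw [h0, mul_zero, abs_zero]; positivity
    · exact abs_mul_le' (h h0) (hA1abs ω)
  have int19 : Integrable (fun ω => ((δ / (δ * π1 (X1 ω) + 1 - π1 (X1 ω))) * m1 (X1 ω)) * A1 ω) P := by
    refine integrable_of_ae_bound
      (((measurable_const.div hD1m).mul hm1c).mul hA1).aestronglyMeasurable
      (C := (δ / min δ 1) * (((δ / min δ 1) * M + (1 + δ / min δ 1) * M) * 1)) ?_
    filter_upwards [hπ1ge, hπ1le, hm1abs] with ω h1 h2 h
    rcases hA1bin ω with h0 | h0
    · rw [h0, mul_zero, abs_zero]; positivity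
    · rw [mul_assoc]
      refine abs_mul_le' (hbdd1 ω h1 h2) ?_
      exact abs_mul_le' (h h0) (hA1abs ω)
  have int20 : Integrable (fun ω => ((δ / (δ * π1 (X1 ω) + 1 - π1 (X1 ω))) * m1 (X1 ω)) * π1 (X1 ω)) P := by
    refine integrable_of_ae_bound
      (((measurable_const.div hD1m).mul hm1c).mul hp1m).aestronglyMeasurable
      (C := (δ / min δ 1) * ((δ / min δ 1) * M + (1 + δ / min δ 1) * M) * 1) ?_
    filter_upwards [hπ1ge, hπ1le, hm1abs, hq1z] with ω h1 h2 h hz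
    rcases le_or_gt |m1 (X1 ω)| ((δ / min δ 1) * M + (1 + δ / min δ 1) * M) with hm | hm
    · refine abs_mul_le' (abs_mul_le' (hbdd1 ω h1 h2) hm) ?_
      rw [abs_of_nonneg h1]; exact h2
    · have e : ((δ / (δ * π1 (X1 ω) + 1 - π1 (X1 ω))) * m1 (X1 ω)) * π1 (X1 ω) = 0 := by rw [hz hm]; ring
      rw [e, abs_zero]; positivity
  have int21 : Integrable (fun ω => (1 / (δ * π1 (X1 ω) + 1 - π1 (X1 ω))) * (Φ ω * (1 - A1 ω))) P := by
    refine integrable_of_ae_bound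
      ((measurable_const.div hD1m).mul (hΦm.mul (measurable_const.sub hA1))).aestronglyMeasurable
      (C := (1 / min δ 1) * (((δ / min δ 1) * M + (1 + δ / min δ 1) * M) * 1)) ?_
    filter_upwards [hπ1ge, hπ1le, hΦbd] with ω h1 h2 h
    exact abs_mul_le' (hbdd1' ω h1 h2) (abs_mul_le' h (h1A1abs ω))
  have int22 : Integrable (fun ω => (1 / (δ * π1 (X1 ω) + 1 - π1 (X1 ω))) * (m0 (X1 ω) * (1 - A1 ω))) P := by
    refine integrable_of_ae_bound
      ((measurable_const.div hD1m).mul (hm0c.mul (measurable_const.sub hA1))).aestronglyMeasurable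
      (C := (1 / min δ 1) * (((δ / min δ 1) * M + (1 + δ / min δ 1) * M) * 1)) ?_
    filter_upwards [hπ1ge, hπ1le, hm0abs] with ω h1 h2 h
    refine abs_mul_le' (hbdd1' ω h1 h2) ?_
    rcases hA1bin ω with h0 | h0
    · exact abs_mul_le' (h h0) (h1A1abs ω)
    · rw [h0]; norm_num; positivity
  have int23 : Integrable (fun ω => ((1 / (δ * π1 (X1 ω) + 1 - π1 (X1 ω))) * m0 (X1 ω)) * (1 - A1 ω)) P := by
    refine integrable_of_ae_bound
      (((measurable_const.div hD1m).mul hm0c).mul (measurable_const.sub hA1)).aestronglyMeasurable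
      (C := (1 / min δ 1) * (((δ / min δ 1) * M + (1 + δ / min δ 1) * M) * 1)) ?_
    filter_upwards [hπ1ge, hπ1le, hm0abs] with ω h1 h2 h
    rcases hA1bin ω with h0 | h0
    · rw [mul_assoc]
      exact abs_mul_le' (hbdd1' ω h1 h2) (abs_mul_le' (h h0) (h1A1abs ω))
    · rw [h0]; norm_num; positivity
  have int24 : Integrable (fun ω => ((1 / (δ * π1 (X1 ω) + 1 - π1 (X1 ω))) * m0 (X1 ω)) * (1 - π1 (X1 ω))) P := by
    refine integrable_of_ae_bound
      (((measurable_const.div hD1m).mul hm0c).mul (measurable_const.sub hp1m)).aestronglyMeasurable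
      (C := (1 / min δ 1) * ((δ / min δ 1) * M + (1 + δ / min δ 1) * M) * 1) ?_
    filter_upwards [hπ1ge, hπ1le, hm0abs, hq1o] with ω h1 h2 h hz
    rcases le_or_gt |m0 (X1 ω)| ((δ / min δ 1) * M + (1 + δ / min δ 1) * M) with hm | hm
    · refine abs_mul_le' (abs_mul_le' (hbdd1' ω h1 h2) hm) ?_
      rw [abs_le]; constructor <;> linarith
    · have e : ((1 / (δ * π1 (X1 ω) + 1 - π1 (X1 ω))) * m0 (X1 ω)) * (1 - π1 (X1 ω)) = 0 := by rw [hz hm]; ring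
      rw [e, abs_zero]; positivity
  -- strong measurability w.r.t. comap σ-algebras
  have hsmG2a : StronglyMeasurable[MeasurableSpace.comap H2 inferInstance]
      (fun ω => (((δ * A1 ω + 1 - A1 ω) / (δ * π1 (X1 ω) + 1 - π1 (X1 ω))) * (δ / (δ * π2 (H2 ω) + 1 - π2 (H2 ω))))) := by
    have heq : (fun ω => (((δ * A1 ω + 1 - A1 ω) / (δ * π1 (X1 ω) + 1 - π1 (X1 ω))) * (δ / (δ * π2 (H2 ω) + 1 - π2 (H2 ω)))))
        = fun ω => (fun p : 𝒳₁ × ℝ × 𝒳₂ => (((δ * p.2.1 + 1 - p.2.1) / (δ * π1 p.1 + 1 - π1 p.1)) * (δ / (δ * π2 p + 1 - π2 p)))) (H2 ω) := by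
      funext ω; simp only [hH2]
    have ha : Measurable fun p : 𝒳₁ × ℝ × 𝒳₂ => p.2.1 := measurable_fst.comp measurable_snd
    have hb : Measurable fun p : 𝒳₁ × ℝ × 𝒳₂ => π1 p.1 := hπ1meas.comp measurable_fst
    have hGG : Measurable (fun p : 𝒳₁ × ℝ × 𝒳₂ => (((δ * p.2.1 + 1 - p.2.1) / (δ * π1 p.1 + 1 - π1 p.1)) * (δ / (δ * π2 p + 1 - π2 p)))) :=
      ((((measurable_const.mul ha).add measurable_const).sub ha).div
        (((measurable_const.mul hb).add measurable_const).sub hb)).mul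
        (measurable_const.div (((measurable_const.mul hπ2meas).add measurable_const).sub hπ2meas))
    rw [heq]
    exact comap_sm H2 _ hGG
  have hsmG2aμ : StronglyMeasurable[MeasurableSpace.comap H2 inferInstance]
      (fun ω => (((δ * A1 ω + 1 - A1 ω) / (δ * π1 (X1 ω) + 1 - π1 (X1 ω))) * (δ / (δ * π2 (H2 ω) + 1 - π2 (H2 ω)))) * μ1 (H2 ω)) := by
    have heq : (fun ω => (((δ * A1 ω + 1 - A1 ω) / (δ * π1 (X1 ω) + 1 - π1 (X1 ω))) * (δ / (δ * π2 (H2 ω) + 1 - π2 (H2 ω)))) * μ1 (H2 ω))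
        = fun ω => (fun p : 𝒳₁ × ℝ × 𝒳₂ => (((δ * p.2.1 + 1 - p.2.1) / (δ * π1 p.1 + 1 - π1 p.1)) * (δ / (δ * π2 p + 1 - π2 p))) * μ1 p) (H2 ω) := by
      funext ω; simp only [hH2]
    have ha : Measurable fun p : 𝒳₁ × ℝ × 𝒳₂ => p.2.1 := measurable_fst.comp measurable_snd
    have hb : Measurable fun p : 𝒳₁ × ℝ × 𝒳₂ => π1 p.1 := hπ1meas.comp measurable_fst
    have hGG : Measurable (fun p : 𝒳₁ × ℝ × 𝒳₂ => (((δ * p.2.1 + 1 - p.2.1) / (δ * π1 p.1 + 1 - π1 p.1)) * (δ / (δ * π2 p + 1 - π2 p))) * μ1 p) :=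
      (((((measurable_const.mul ha).add measurable_const).sub ha).div
        (((measurable_const.mul hb).add measurable_const).sub hb)).mul
        (measurable_const.div
          (((measurable_const.mul hπ2meas).add measurable_const).sub hπ2meas))).mul hμ1meas
    rw [heq]
    exact comap_sm H2 _ hGG
  have hsmG2b : StronglyMeasurable[MeasurableSpace.comap H2 inferInstance]
      (fun ω => (((δ * A1 ω + 1 - A1 ω) / (δ * π1 (X1 ω) + 1 - π1 (X1 ω))) * (1 / (δ * π2 (H2 ω) + 1 - π2 (H2 ω))))) := by
    have heq : (fun ω => (((δ * A1 ω + 1 - A1 ω) / (δ * π1 (X1 ω) + 1 - π1 (X1 ω))) * (1 / (δ * π2 (H2 ω) + 1 - π2 (H2 ω)))))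
        = fun ω => (fun p : 𝒳₁ × ℝ × 𝒳₂ => (((δ * p.2.1 + 1 - p.2.1) / (δ * π1 p.1 + 1 - π1 p.1)) * (1 / (δ * π2 p + 1 - π2 p)))) (H2 ω) := by
      funext ω; simp only [hH2]
    have ha : Measurable fun p : 𝒳₁ × ℝ × 𝒳₂ => p.2.1 := measurable_fst.comp measurable_snd
    have hb : Measurable fun p : 𝒳₁ × ℝ × 𝒳₂ => π1 p.1 := hπ1meas.comp measurable_fst
    have hGG : Measurable (fun p : 𝒳₁ × ℝ × 𝒳₂ => (((δ * p.2.1 + 1 - p.2.1) / (δ * π1 p.1 + 1 - π1 p.1)) * (1 / (δ * π2 p + 1 - π2 p)))) :=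
      ((((measurable_const.mul ha).add measurable_const).sub ha).div
        (((measurable_const.mul hb).add measurable_const).sub hb)).mul
        (measurable_const.div (((measurable_const.mul hπ2meas).add measurable_const).sub hπ2meas))
    rw [heq]
    exact comap_sm H2 _ hGG
  have hsmG2bμ : StronglyMeasurable[MeasurableSpace.comap H2 inferInstance]
      (fun ω => (((δ * A1 ω + 1 - A1 ω) / (δ * π1 (X1 ω) + 1 - π1 (X1 ω))) * (1 / (δ * π2 (H2 ω) + 1 - π2 (H2 ω)))) * μ0 (H2 ω)) := by
    have heq : (fun ω => (((δ * A1 ω + 1 - A1 ω) / (δ * π1 (X1 ω) + 1 - π1 (X1 ω))) * (1 / (δ * π2 (H2 ω) + 1 - π2 (H2 ω)))) * μ0 (H2 ω))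
        = fun ω => (fun p : 𝒳₁ × ℝ × 𝒳₂ => (((δ * p.2.1 + 1 - p.2.1) / (δ * π1 p.1 + 1 - π1 p.1)) * (1 / (δ * π2 p + 1 - π2 p))) * μ0 p) (H2 ω) := by
      funext ω; simp only [hH2]
    have ha : Measurable fun p : 𝒳₁ × ℝ × 𝒳₂ => p.2.1 := measurable_fst.comp measurable_snd
    have hb : Measurable fun p : 𝒳₁ × ℝ × 𝒳₂ => π1 p.1 := hπ1meas.comp measurable_fst
    have hGG : Measurable (fun p : 𝒳₁ × ℝ × 𝒳₂ => (((δ * p.2.1 + 1 - p.2.1) / (δ * π1 p.1 + 1 - π1 p.1)) * (1 / (δ * π2 p + 1 - π2 p))) * μ0 p) :=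
      (((((measurable_const.mul ha).add measurable_const).sub ha).div
        (((measurable_const.mul hb).add measurable_const).sub hb)).mul
        (measurable_const.div
          (((measurable_const.mul hπ2meas).add measurable_const).sub hπ2meas))).mul hμ0meas
    rw [heq]
    exact comap_sm H2 _ hGG
  have hsmd1 : StronglyMeasurable[MeasurableSpace.comap X1 inferInstance]
      (fun ω => δ / (δ * π1 (X1 ω) + 1 - π1 (X1 ω))) :=
    comap_sm X1 (fun x => δ / (δ * π1 x + 1 - π1 x))
      (measurable_const.div (((measurable_const.mul hπ1meas).add measurable_const).sub hπ1meas))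
  have hsmd1m1 : StronglyMeasurable[MeasurableSpace.comap X1 inferInstance]
      (fun ω => (δ / (δ * π1 (X1 ω) + 1 - π1 (X1 ω))) * m1 (X1 ω)) :=
    comap_sm X1 (fun x => (δ / (δ * π1 x + 1 - π1 x)) * m1 x)
      ((measurable_const.div
        (((measurable_const.mul hπ1meas).add measurable_const).sub hπ1meas)).mul hm1meas)
  have hsmd1' : StronglyMeasurable[MeasurableSpace.comap X1 inferInstance]
      (fun ω => 1 / (δ * π1 (X1 ω) + 1 - π1 (X1 ω))) :=
    comap_sm X1 (fun x => 1 / (δ * π1 x + 1 - π1 x))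
      (measurable_const.div (((measurable_const.mul hπ1meas).add measurable_const).sub hπ1meas))
  have hsmd1m0 : StronglyMeasurable[MeasurableSpace.comap X1 inferInstance]
      (fun ω => (1 / (δ * π1 (X1 ω) + 1 - π1 (X1 ω))) * m0 (X1 ω)) :=
    comap_sm X1 (fun x => (1 / (δ * π1 x + 1 - π1 x)) * m0 x)
      ((measurable_const.div
        (((measurable_const.mul hπ1meas).add measurable_const).sub hπ1meas)).mul hm0meas)
  -- indicator rewriting
  have eA2 : ∀ (g : Ω → ℝ) (S : Set (𝒳₁ × ℝ × 𝒳₂)),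
      ∫ ω in H2 ⁻¹' S, g ω * A2 ω ∂P = ∫ ω in H2 ⁻¹' S ∩ {ω | A2 ω = 1}, g ω ∂P := by
    intro g S
    have hrw : (fun ω => g ω * A2 ω) = fun ω => Set.indicator {ω | A2 ω = 1} g ω := by
      funext ω
      rcases hA2bin ω with h | h <;> simp [Set.indicator_apply, Set.mem_setOf_eq, h]
    rw [hrw, setIntegral_indicator hA2s1]
  have eA2' : ∀ (g : Ω → ℝ) (S : Set (𝒳₁ × ℝ × 𝒳₂)),
      ∫ ω in H2 ⁻¹' S, g ω * (1 - A2 ω) ∂P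
        = ∫ ω in H2 ⁻¹' S ∩ {ω | A2 ω = 0}, g ω ∂P := by
    intro g S
    have hrw : (fun ω => g ω * (1 - A2 ω))
        = fun ω => Set.indicator {ω | A2 ω = 0} g ω := by
      funext ω
      rcases hA2bin ω with h | h <;> simp [Set.indicator_apply, Set.mem_setOf_eq, h]
    rw [hrw, setIntegral_indicator hA2s0]
  have eA1 : ∀ (g : Ω → ℝ) (S : Set 𝒳₁),
      ∫ ω in X1 ⁻¹' S, g ω * A1 ω ∂P = ∫ ω in X1 ⁻¹' S ∩ {ω | A1 ω = 1}, g ω ∂P := by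
    intro g S
    have hrw : (fun ω => g ω * A1 ω) = fun ω => Set.indicator {ω | A1 ω = 1} g ω := by
      funext ω
      rcases hA1bin ω with h | h <;> simp [Set.indicator_apply, Set.mem_setOf_eq, h]
    rw [hrw, setIntegral_indicator hA1s1]
  have eA1' : ∀ (g : Ω → ℝ) (S : Set 𝒳₁),
      ∫ ω in X1 ⁻¹' S, g ω * (1 - A1 ω) ∂P
        = ∫ ω in X1 ⁻¹' S ∩ {ω | A1 ω = 0}, g ω ∂P := by
    intro g S
    have hrw : (fun ω => g ω * (1 - A1 ω))
        = fun ω => Set.indicator {ω | A1 ω = 0} g ω := by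
      funext ω
      rcases hA1bin ω with h | h <;> simp [Set.indicator_apply, Set.mem_setOf_eq, h]
    rw [hrw, setIntegral_indicator hA1s0]
  -- set-integral equalities for key
  have hset1 : ∀ s, MeasurableSet[MeasurableSpace.comap H2 inferInstance] s →
      ∫ ω in s, Y ω * A2 ω ∂P = ∫ ω in s, μ1 (H2 ω) * A2 ω ∂P := by
    rintro s ⟨S, hS, rfl⟩
    rw [eA2 Y S, eA2 (fun ω => μ1 (H2 ω)) S, hμ1 S hS]
  have hset2 : ∀ s, MeasurableSet[MeasurableSpace.comap H2 inferInstance] s →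
      ∫ ω in s, A2 ω ∂P = ∫ ω in s, π2 (H2 ω) ∂P := by
    rintro s ⟨S, hS, rfl⟩
    exact hπ2 S hS
  have hset3 : ∀ s, MeasurableSet[MeasurableSpace.comap H2 inferInstance] s →
      ∫ ω in s, Y ω * (1 - A2 ω) ∂P = ∫ ω in s, μ0 (H2 ω) * (1 - A2 ω) ∂P := by
    rintro s ⟨S, hS, rfl⟩
    rw [eA2' Y S, eA2' (fun ω => μ0 (H2 ω)) S, hμ0 S hS]
  have hset4 : ∀ s, MeasurableSet[MeasurableSpace.comap H2 inferInstance] s →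
      ∫ ω in s, (1 - A2 ω) ∂P = ∫ ω in s, (1 - π2 (H2 ω)) ∂P := by
    rintro s ⟨S, hS, rfl⟩
    rw [integral_sub (integrable_const 1).integrableOn hA2int.integrableOn,
      integral_sub (integrable_const 1).integrableOn hπ2int.integrableOn, hπ2 S hS]
  have hset5 : ∀ s, MeasurableSet[MeasurableSpace.comap X1 inferInstance] s →
      ∫ ω in s, Φ ω * A1 ω ∂P = ∫ ω in s, m1 (X1 ω) * A1 ω ∂P := by
    rintro s ⟨S, hS, rfl⟩
    rw [eA1 Φ S, eA1 (fun ω => m1 (X1 ω)) S, hm1 S hS]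
  have hset6 : ∀ s, MeasurableSet[MeasurableSpace.comap X1 inferInstance] s →
      ∫ ω in s, A1 ω ∂P = ∫ ω in s, π1 (X1 ω) ∂P := by
    rintro s ⟨S, hS, rfl⟩
    exact hπ1 S hS
  have hset7 : ∀ s, MeasurableSet[MeasurableSpace.comap X1 inferInstance] s →
      ∫ ω in s, Φ ω * (1 - A1 ω) ∂P = ∫ ω in s, m0 (X1 ω) * (1 - A1 ω) ∂P := by
    rintro s ⟨S, hS, rfl⟩
    rw [eA1' Φ S, eA1' (fun ω => m0 (X1 ω)) S, hm0 S hS]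
  have hset8 : ∀ s, MeasurableSet[MeasurableSpace.comap X1 inferInstance] s →
      ∫ ω in s, (1 - A1 ω) ∂P = ∫ ω in s, (1 - π1 (X1 ω)) ∂P := by
    rintro s ⟨S, hS, rfl⟩
    rw [integral_sub (integrable_const 1).integrableOn hA1int.integrableOn,
      integral_sub (integrable_const 1).integrableOn hπ1int.integrableOn, hπ1 S hS]
  -- branch computations
  have B2a : ∫ ω, (((δ * A1 ω + 1 - A1 ω) / (δ * π1 (X1 ω) + 1 - π1 (X1 ω))) * (δ / (δ * π2 (H2 ω) + 1 - π2 (H2 ω)))) * (Y ω * A2 ω) ∂P = ∫ ω, ((((δ * A1 ω + 1 - A1 ω) / (δ * π1 (X1 ω) + 1 - π1 (X1 ω))) * (δ / (δ * π2 (H2 ω) + 1 - π2 (H2 ω)))) * μ1 (H2 ω)) * π2 (H2 ω) ∂P := by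
    calc ∫ ω, (((δ * A1 ω + 1 - A1 ω) / (δ * π1 (X1 ω) + 1 - π1 (X1 ω))) * (δ / (δ * π2 (H2 ω) + 1 - π2 (H2 ω)))) * (Y ω * A2 ω) ∂P
        = ∫ ω, (((δ * A1 ω + 1 - A1 ω) / (δ * π1 (X1 ω) + 1 - π1 (X1 ω))) * (δ / (δ * π2 (H2 ω) + 1 - π2 (H2 ω)))) * (μ1 (H2 ω) * A2 ω) ∂P :=
          key P hH2meas.comap_le _ _ _ int1 int2 int5 int6 hsmG2a hset1
      _ = ∫ ω, ((((δ * A1 ω + 1 - A1 ω) / (δ * π1 (X1 ω) + 1 - π1 (X1 ω))) * (δ / (δ * π2 (H2 ω) + 1 - π2 (H2 ω)))) * μ1 (H2 ω)) * A2 ω ∂P :=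
          integral_congr_ae (Filter.Eventually.of_forall fun ω => by dsimp only; ring)
      _ = ∫ ω, ((((δ * A1 ω + 1 - A1 ω) / (δ * π1 (X1 ω) + 1 - π1 (X1 ω))) * (δ / (δ * π2 (H2 ω) + 1 - π2 (H2 ω)))) * μ1 (H2 ω)) * π2 (H2 ω) ∂P :=
          key P hH2meas.comap_le _ _ _ hA2int hπ2int int7 int8 hsmG2aμ hset2
  have B2b : ∫ ω, (((δ * A1 ω + 1 - A1 ω) / (δ * π1 (X1 ω) + 1 - π1 (X1 ω))) * (1 / (δ * π2 (H2 ω) + 1 - π2 (H2 ω)))) * (Y ω * (1 - A2 ω)) ∂P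
      = ∫ ω, ((((δ * A1 ω + 1 - A1 ω) / (δ * π1 (X1 ω) + 1 - π1 (X1 ω))) * (1 / (δ * π2 (H2 ω) + 1 - π2 (H2 ω)))) * μ0 (H2 ω)) * (1 - π2 (H2 ω)) ∂P := by
    calc ∫ ω, (((δ * A1 ω + 1 - A1 ω) / (δ * π1 (X1 ω) + 1 - π1 (X1 ω))) * (1 / (δ * π2 (H2 ω) + 1 - π2 (H2 ω)))) * (Y ω * (1 - A2 ω)) ∂P
        = ∫ ω, (((δ * A1 ω + 1 - A1 ω) / (δ * π1 (X1 ω) + 1 - π1 (X1 ω))) * (1 / (δ * π2 (H2 ω) + 1 - π2 (H2 ω)))) * (μ0 (H2 ω) * (1 - A2 ω)) ∂P :=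
          key P hH2meas.comap_le _ _ _ int3 int4 int9 int10 hsmG2b hset3
      _ = ∫ ω, ((((δ * A1 ω + 1 - A1 ω) / (δ * π1 (X1 ω) + 1 - π1 (X1 ω))) * (1 / (δ * π2 (H2 ω) + 1 - π2 (H2 ω)))) * μ0 (H2 ω)) * (1 - A2 ω) ∂P :=
          integral_congr_ae (Filter.Eventually.of_forall fun ω => by dsimp only; ring)
      _ = ∫ ω, ((((δ * A1 ω + 1 - A1 ω) / (δ * π1 (X1 ω) + 1 - π1 (X1 ω))) * (1 / (δ * π2 (H2 ω) + 1 - π2 (H2 ω)))) * μ0 (H2 ω)) * (1 - π2 (H2 ω)) ∂P := by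
          refine key P hH2meas.comap_le _ _ _ ?_ ?_ int11 int12 hsmG2bμ hset4
          · exact (integrable_const 1).sub hA2int
          · exact (integrable_const 1).sub hπ2int
  have B1a : ∫ ω, (δ / (δ * π1 (X1 ω) + 1 - π1 (X1 ω))) * (Φ ω * A1 ω) ∂P
      = ∫ ω, ((δ / (δ * π1 (X1 ω) + 1 - π1 (X1 ω))) * m1 (X1 ω)) * π1 (X1 ω) ∂P := by
    calc ∫ ω, (δ / (δ * π1 (X1 ω) + 1 - π1 (X1 ω))) * (Φ ω * A1 ω) ∂P
        = ∫ ω, (δ / (δ * π1 (X1 ω) + 1 - π1 (X1 ω))) * (m1 (X1 ω) * A1 ω) ∂P :=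
          key P hX1.comap_le _ _ _ int13 int14 int17 int18 hsmd1 hset5
      _ = ∫ ω, ((δ / (δ * π1 (X1 ω) + 1 - π1 (X1 ω))) * m1 (X1 ω)) * A1 ω ∂P :=
          integral_congr_ae (Filter.Eventually.of_forall fun ω => by dsimp only; ring)
      _ = ∫ ω, ((δ / (δ * π1 (X1 ω) + 1 - π1 (X1 ω))) * m1 (X1 ω)) * π1 (X1 ω) ∂P :=
          key P hX1.comap_le _ _ _ hA1int hπ1int int19 int20 hsmd1m1 hset6
  have B1b : ∫ ω, (1 / (δ * π1 (X1 ω) + 1 - π1 (X1 ω))) * (Φ ω * (1 - A1 ω)) ∂P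
      = ∫ ω, ((1 / (δ * π1 (X1 ω) + 1 - π1 (X1 ω))) * m0 (X1 ω)) * (1 - π1 (X1 ω)) ∂P := by
    calc ∫ ω, (1 / (δ * π1 (X1 ω) + 1 - π1 (X1 ω))) * (Φ ω * (1 - A1 ω)) ∂P
        = ∫ ω, (1 / (δ * π1 (X1 ω) + 1 - π1 (X1 ω))) * (m0 (X1 ω) * (1 - A1 ω)) ∂P :=
          key P hX1.comap_le _ _ _ int15 int16 int21 int22 hsmd1' hset7
      _ = ∫ ω, ((1 / (δ * π1 (X1 ω) + 1 - π1 (X1 ω))) * m0 (X1 ω)) * (1 - A1 ω) ∂P :=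
          integral_congr_ae (Filter.Eventually.of_forall fun ω => by dsimp only; ring)
      _ = ∫ ω, ((1 / (δ * π1 (X1 ω) + 1 - π1 (X1 ω))) * m0 (X1 ω)) * (1 - π1 (X1 ω)) ∂P := by
          refine key P hX1.comap_le _ _ _ ?_ ?_ int23 int24 hsmd1m0 hset8
          · exact (integrable_const 1).sub hA1int
          · exact (integrable_const 1).sub hπ1int
  -- final assembly
  calc ∫ ω, ((δ * π1 (X1 ω) / (δ * π1 (X1 ω) + 1 - π1 (X1 ω))) * m1 (X1 ω) + (1 - δ * π1 (X1 ω) / (δ * π1 (X1 ω) + 1 - π1 (X1 ω))) * m0 (X1 ω)) ∂P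
      = ∫ ω, (((δ / (δ * π1 (X1 ω) + 1 - π1 (X1 ω))) * m1 (X1 ω)) * π1 (X1 ω) + ((1 / (δ * π1 (X1 ω) + 1 - π1 (X1 ω))) * m0 (X1 ω)) * (1 - π1 (X1 ω))) ∂P := by
        refine integral_congr_ae ?_
        filter_upwards [hπ1ge, hπ1le] with ω h0 h1
        have hne : (δ * π1 (X1 ω) + 1 - π1 (X1 ω)) ≠ 0 := ne_of_gt (lt_of_lt_of_le hc (hdaux _ h0 h1))
        field_simp
        ring
    _ = ∫ ω, ((δ / (δ * π1 (X1 ω) + 1 - π1 (X1 ω))) * m1 (X1 ω)) * π1 (X1 ω) ∂P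
        + ∫ ω, ((1 / (δ * π1 (X1 ω) + 1 - π1 (X1 ω))) * m0 (X1 ω)) * (1 - π1 (X1 ω)) ∂P := integral_add int20 int24
    _ = ∫ ω, (δ / (δ * π1 (X1 ω) + 1 - π1 (X1 ω))) * (Φ ω * A1 ω) ∂P
        + ∫ ω, (1 / (δ * π1 (X1 ω) + 1 - π1 (X1 ω))) * (Φ ω * (1 - A1 ω)) ∂P := by rw [B1a, B1b]
    _ = ∫ ω, ((δ / (δ * π1 (X1 ω) + 1 - π1 (X1 ω))) * (Φ ω * A1 ω) + (1 / (δ * π1 (X1 ω) + 1 - π1 (X1 ω))) * (Φ ω * (1 - A1 ω))) ∂P :=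
        (integral_add int17 int21).symm
    _ = ∫ ω, ((δ * A1 ω + 1 - A1 ω) / (δ * π1 (X1 ω) + 1 - π1 (X1 ω))) * Φ ω ∂P := by
        refine integral_congr_ae (Filter.Eventually.of_forall fun ω => ?_)
        dsimp only; ring
    _ = ∫ ω, (((((δ * A1 ω + 1 - A1 ω) / (δ * π1 (X1 ω) + 1 - π1 (X1 ω))) * (δ / (δ * π2 (H2 ω) + 1 - π2 (H2 ω)))) * μ1 (H2 ω)) * π2 (H2 ω) + ((((δ * A1 ω + 1 - A1 ω) / (δ * π1 (X1 ω) + 1 - π1 (X1 ω))) * (1 / (δ * π2 (H2 ω) + 1 - π2 (H2 ω)))) * μ0 (H2 ω)) * (1 - π2 (H2 ω))) ∂P := by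
        refine integral_congr_ae ?_
        filter_upwards [hπ1ge, hπ1le, hπ2ge, hπ2le] with ω h0 h1 h2 h3
        have hne1 : (δ * π1 (X1 ω) + 1 - π1 (X1 ω)) ≠ 0 := ne_of_gt (lt_of_lt_of_le hc (hdaux _ h0 h1))
        have hne2 : (δ * π2 (H2 ω) + 1 - π2 (H2 ω)) ≠ 0 := ne_of_gt (lt_of_lt_of_le hc (hdaux _ h2 h3))
        rw [hΦdef]
        dsimp only
        field_simp
        ring
    _ = ∫ ω, ((((δ * A1 ω + 1 - A1 ω) / (δ * π1 (X1 ω) + 1 - π1 (X1 ω))) * (δ / (δ * π2 (H2 ω) + 1 - π2 (H2 ω)))) * μ1 (H2 ω)) * π2 (H2 ω) ∂P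
        + ∫ ω, ((((δ * A1 ω + 1 - A1 ω) / (δ * π1 (X1 ω) + 1 - π1 (X1 ω))) * (1 / (δ * π2 (H2 ω) + 1 - π2 (H2 ω)))) * μ0 (H2 ω)) * (1 - π2 (H2 ω)) ∂P := integral_add int8 int12
    _ = ∫ ω, (((δ * A1 ω + 1 - A1 ω) / (δ * π1 (X1 ω) + 1 - π1 (X1 ω))) * (δ / (δ * π2 (H2 ω) + 1 - π2 (H2 ω)))) * (Y ω * A2 ω) ∂P
        + ∫ ω, (((δ * A1 ω + 1 - A1 ω) / (δ * π1 (X1 ω) + 1 - π1 (X1 ω))) * (1 / (δ * π2 (H2 ω) + 1 - π2 (H2 ω)))) * (Y ω * (1 - A2 ω)) ∂P := by rw [B2a, B2b]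
    _ = ∫ ω, ((((δ * A1 ω + 1 - A1 ω) / (δ * π1 (X1 ω) + 1 - π1 (X1 ω))) * (δ / (δ * π2 (H2 ω) + 1 - π2 (H2 ω)))) * (Y ω * A2 ω) + (((δ * A1 ω + 1 - A1 ω) / (δ * π1 (X1 ω) + 1 - π1 (X1 ω))) * (1 / (δ * π2 (H2 ω) + 1 - π2 (H2 ω)))) * (Y ω * (1 - A2 ω))) ∂P :=
        (integral_add int5 int9).symm
    _ = ∫ ω, Y ω * ((δ * A1 ω + 1 - A1 ω) / (δ * π1 (X1 ω) + 1 - π1 (X1 ω))) * ((δ * A2 ω + 1 - A2 ω) / (δ * π2 (H2 ω) + 1 - π2 (H2 ω))) ∂P := by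
        refine integral_congr_ae (Filter.Eventually.of_forall fun ω => ?_)
        dsimp only; ring
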